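/- arXiv:1805.05189 — 2 statements merged into one kernel-verified Lean document; each statement's English description precedes it below -/
import Mathlib

section
/- Let f : ℝ → ℝ be convex and L₀-Lipschitz, and let Z be uniform on [−1,1]. Then f_a(x) = E[f(x + aZ)] is differentiable with f_a'(x) = (f(x+a) − f(x−a))/(2a), and f_a' is (L₀/a)-Lipschitz. -/
open scoped NNReal

/-- For `f : ℝ → ℝ` convex and `L₀`-Lipschitz, `a > 0`, and `Z` uniform on `[-1,1]`,
the smoothed function `f_a x = (1/(2a)) ∫_{x-a}^{x+a} f` is differentiable with
derivative `(f (x+a) - f (x-a)) / (2a)`, and this derivative is `(L₀/a)`-Lipschitz. -/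
theorem smoothing_one_dim_deriv
    (f : ℝ → ℝ) (hf : ConvexOn ℝ Set.univ f)
    (L₀ : ℝ≥0) (hLip : LipschitzWith L₀ f)
    (a : ℝ) (ha : 0 < a)
    (fa : ℝ → ℝ) (hfa : ∀ x, fa x = (1 / (2 * a)) * ∫ t in (x - a)..(x + a), f t) :
    (∀ x, HasDerivAt fa ((f (x + a) - f (x - a)) / (2 * a)) x) ∧
      (∀ x y, |(f (x + a) - f (x - a)) / (2 * a) - (f (y + a) - f (y - a)) / (2 * a)|
        ≤ (L₀ / a) * |x - y|) := by
  have hc : Continuous f := hLip.continuous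
  set g : ℝ → ℝ := fun u => ∫ t in (0:ℝ)..u, f t with hg_def
  have hg : ∀ u : ℝ, HasDerivAt g (f u) u := fun u =>
    intervalIntegral.integral_hasDerivAt_right (hc.intervalIntegrable 0 u : IntervalIntegrable f MeasureTheory.volume 0 u)
      (hc.stronglyMeasurableAtFilter MeasureTheory.volume (nhds u)) hc.continuousAt
  have hsplit : ∀ x : ℝ, (∫ t in (x - a)..(x + a), f t) = g (x + a) - g (x - a) := by
    intro x
    have := intervalIntegral.integral_add_adjacent_intervals
      (hc.intervalIntegrable 0 (x - a) : IntervalIntegrable f MeasureTheory.volume 0 (x - a)) (hc.intervalIntegrable (x - a) (x + a) : IntervalIntegrable f MeasureTheory.volume (x - a) (x + a))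
    simp only [hg_def]
    linarith
  have hfa' : fa = fun x => (1 / (2 * a)) * (g (x + a) - g (x - a)) := by
    funext x; rw [hfa x, hsplit x]
  constructor
  · intro x
    rw [hfa']
    have h1 : HasDerivAt (fun x : ℝ => g (x + a)) (f (x + a)) x := by
      have := (hg (x + a)).comp x ((hasDerivAt_id x).add_const a)
      simp at this; exact this
    have h2 : HasDerivAt (fun x : ℝ => g (x - a)) (f (x - a)) x := by
      have := (hg (x - a)).comp x ((hasDerivAt_id x).sub_const a)
      simp at this; exact this
    have : HasDerivAt (fun y : ℝ => 1 / (2 * a) * (g (y + a) - g (y - a))) (1 / (2 * a) * (f (x + a) - f (x - a))) x := ((h1.sub h2).const_mul (1 / (2 * a)))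
    convert this using 1
    ring
  · intro x y
    have key : ∀ u v : ℝ, |f u - f v| ≤ (L₀ : ℝ) * |u - v| := by
      intro u v
      have := hLip.dist_le_mul u v
      simpa [Real.dist_eq] using this
    have h1 := key (x + a) (y + a)
    have h2 := key (x - a) (y - a)
    have hxy : |(x + a) - (y + a)| = |x - y| := by ring_nf
    have hxy2 : |(x - a) - (y - a)| = |x - y| := by ring_nf
    rw [hxy] at h1; rw [hxy2] at h2
    have h2a : (0:ℝ) < 2 * a := by linarith
    rw [div_sub_div_same, abs_div, abs_of_pos h2a, div_le_iff₀ h2a]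
    have htri : |f (x + a) - f (x - a) - (f (y + a) - f (y - a))|
        ≤ |f (x + a) - f (y + a)| + |f (x - a) - f (y - a)| := by
      have : f (x + a) - f (x - a) - (f (y + a) - f (y - a))
          = (f (x + a) - f (y + a)) - (f (x - a) - f (y - a)) := by ring
      rw [this]
      exact abs_sub _ _
    have : |f (x + a) - f (x - a) - (f (y + a) - f (y - a))|
        ≤ 2 * ((L₀ : ℝ) * |x - y|) := by
      calc _ ≤ |f (x + a) - f (y + a)| + |f (x - a) - f (y - a)| := htri
        _ ≤ (L₀ : ℝ) * |x - y| + (L₀ : ℝ) * |x - y| := add_le_add h1 h2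
        _ = 2 * ((L₀ : ℝ) * |x - y|) := by ring
    calc |f (x + a) - f (x - a) - (f (y + a) - f (y - a))|
        ≤ 2 * ((L₀ : ℝ) * |x - y|) := this
      _ = (L₀ : ℝ) / a * |x - y| * (2 * a) := by field_simp
end

section
/- Let f₁,…,f_N : ℝ^d → ℝ each be convex with L-Lipschitz gradient, let F = (1/N)·Σᵢ fᵢ, and let x* minimize F + R where R is convex (with 0 ∈ ∂(F+R)(x*) and each ∇fᵢ(x*) need not vanish). Suppose additionally ‖∇fᵢ(x*)‖₂ ≤ G for all i. Then (1/N)·Σᵢ ‖∇fᵢ(x) − ∇fᵢ(x*)‖₂² ≤ 2L·(F(x) − F(x*) − ⟨∇F(x*), x − x*⟩). -/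
open scoped RealInnerProductSpace

variable {E : Type*} [NormedAddCommGroup E] [InnerProductSpace ℝ E] [CompleteSpace E]

lemma hasDerivAt_comp_line (f : E → ℝ) (g : E → E)
    (hgrad : ∀ y, HasGradientAt f (g y) y) (a v : E) (t : ℝ) :
    HasDerivAt (fun s : ℝ => f (a + s • v)) ⟪g (a + t • v), v⟫ t := by
  have hc : HasDerivAt (fun s : ℝ => a + s • v) v t :=
    by simpa using ((hasDerivAt_id t).smul_const v).const_add a
  have hf := (hgrad (a + t • v)).hasFDerivAt
  have := hf.comp_hasDerivAt t hc
  simpa [InnerProductSpace.toDual_apply_apply, Function.comp_def] using this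

lemma descent_lemma (f : E → ℝ) (g : E → E)
    (hgrad : ∀ y, HasGradientAt f (g y) y) (L : ℝ) (hL : 0 ≤ L)
    (hLip : ∀ x y, ‖g x - g y‖ ≤ L * ‖x - y‖) (a b : E) :
    f b ≤ f a + ⟪g a, b - a⟫ + L / 2 * ‖b - a‖ ^ 2 := by
  set v := b - a with hv
  have hgc : Continuous g := by
    have : LipschitzWith ⟨L, hL⟩ g := by
      apply LipschitzWith.of_dist_le_mul
      intro x y
      rw [dist_eq_norm, dist_eq_norm]; exact hLip x y
    exact this.continuous
  have hcont : Continuous (fun t : ℝ => ⟪g (a + t • v), v⟫) := by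
    exact (Continuous.inner (hgc.comp (by continuity)) continuous_const)
  have key : f (a + (1:ℝ) • v) - f (a + (0:ℝ) • v)
      = ∫ t in (0:ℝ)..1, ⟪g (a + t • v), v⟫ := by
    refine (intervalIntegral.integral_eq_sub_of_hasDerivAt
      (fun t _ => hasDerivAt_comp_line f g hgrad a v t) ?_).symm
    exact hcont.intervalIntegrable 0 1
  have hb : a + (1:ℝ) • v = b := by rw [hv]; abel_nf; module
  have ha : a + (0:ℝ) • v = a := by simp
  rw [hb, ha] at key
  have bound : ∫ t in (0:ℝ)..1, ⟪g (a + t • v), v⟫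
      ≤ ∫ t in (0:ℝ)..1, (⟪g a, v⟫ + L * t * ‖v‖ ^ 2) := by
    apply intervalIntegral.integral_mono_on (by norm_num)
      (hcont.intervalIntegrable 0 1) (by apply Continuous.intervalIntegrable; continuity)
    intro t ht
    have h1 : ⟪g (a + t • v), v⟫ - ⟪g a, v⟫ = ⟪g (a + t • v) - g a, v⟫ := by
      rw [inner_sub_left]
    have h2 : ⟪g (a + t • v) - g a, v⟫ ≤ ‖g (a + t • v) - g a‖ * ‖v‖ :=
      real_inner_le_norm _ _
    have h3 : ‖g (a + t • v) - g a‖ ≤ L * (t * ‖v‖) := by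
      have := hLip (a + t • v) a
      simpa [norm_smul, abs_of_nonneg ht.1] using this
    nlinarith [norm_nonneg v, mul_le_mul_of_nonneg_right h3 (norm_nonneg v)]
  have rhsval : ∫ t in (0:ℝ)..1, (⟪g a, v⟫ + L * t * ‖v‖ ^ 2)
      = ⟪g a, v⟫ + L / 2 * ‖v‖ ^ 2 := by
    rw [intervalIntegral.integral_add (by apply Continuous.intervalIntegrable; continuity)
      (by apply Continuous.intervalIntegrable; continuity)]
    simp [intervalIntegral.integral_const, mul_assoc, intervalIntegral.integral_const_mul]
    ring
  rw [rhsval] at bound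
  linarith [key, bound]

lemma convex_lb (f : E → ℝ) (hf : ConvexOn ℝ Set.univ f) (g : E → E)
    (hgrad : ∀ y, HasGradientAt f (g y) y) (a b : E) :
    f a + ⟪g a, b - a⟫ ≤ f b := by
  set v := b - a with hv
  have hline : ∀ t : ℝ, (AffineMap.lineMap a b : ℝ →ᵃ[ℝ] E) t = a + t • v := by
    intro t; simp [AffineMap.lineMap_apply, hv]; abel
  have hconv : ConvexOn ℝ Set.univ (f ∘ (AffineMap.lineMap a b : ℝ →ᵃ[ℝ] E)) := by
    simpa using hf.comp_affineMap (AffineMap.lineMap a b)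
  have hfc : (f ∘ (AffineMap.lineMap a b : ℝ →ᵃ[ℝ] E)) = fun s : ℝ => f (a + s • v) := by
    funext s; simp [Function.comp, hline]
  have hd : HasDerivAt (f ∘ (AffineMap.lineMap a b : ℝ →ᵃ[ℝ] E)) ⟪g a, v⟫ 0 := by
    rw [hfc]
    simpa using hasDerivAt_comp_line f g hgrad a v 0
  have hs := hconv.le_slope_of_hasDerivAt (Set.mem_univ (0:ℝ)) (Set.mem_univ (1:ℝ))
    one_pos hd
  rw [slope_def_field] at hs
  simp only [hfc] at hs
  have h1 : a + (1:ℝ) • v = b := by rw [hv]; abel_nf; module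
  have h0 : a + (0:ℝ) • v = a := by simp
  rw [h1, h0] at hs
  have : ⟪g a, v⟫ ≤ f b - f a := by
    have := hs; field_simp at this; linarith
  linarith

lemma cocoercive (f : E → ℝ) (hf : ConvexOn ℝ Set.univ f) (g : E → E)
    (hgrad : ∀ y, HasGradientAt f (g y) y) (L : ℝ) (hL : 0 ≤ L)
    (hLip : ∀ x y, ‖g x - g y‖ ≤ L * ‖x - y‖) (xs x : E) :
    ‖g x - g xs‖ ^ 2 ≤ 2 * L * (f x - f xs - ⟪g xs, x - xs⟫) := by
  rcases eq_or_lt_of_le hL with hL0 | hLpos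
  · have h0 : ‖g x - g xs‖ ≤ 0 := by
      have := hLip x xs; rw [← hL0] at this; simpa using this
    have : ‖g x - g xs‖ = 0 := le_antisymm h0 (norm_nonneg _)
    rw [this, ← hL0]; norm_num
  · set u := g x - g xs with hu
    set z := x - L⁻¹ • u with hzdef
    have d := descent_lemma f g hgrad L hL hLip x z
    have lb := convex_lb f hf g hgrad xs z
    have hz : z - x = -(L⁻¹ • u) := by rw [hzdef]; abel
    have e1 : ⟪g x, z - x⟫ = -(L⁻¹ * ⟪g x, u⟫) := by
      rw [hz, inner_neg_right, real_inner_smul_right]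
    have e2 : ‖z - x‖ ^ 2 = L⁻¹ ^ 2 * ‖u‖ ^ 2 := by
      rw [hz, norm_neg, norm_smul, mul_pow]
      congr 1
      rw [Real.norm_eq_abs, sq_abs]
    have hzs : z - xs = (x - xs) - L⁻¹ • u := by rw [hzdef]; abel
    have e3 : ⟪g xs, z - xs⟫ = ⟪g xs, x - xs⟫ - L⁻¹ * ⟪g xs, u⟫ := by
      rw [hzs, inner_sub_right, real_inner_smul_right]
    have e4 : ⟪g x, u⟫ - ⟪g xs, u⟫ = ‖u‖ ^ 2 := by
      rw [← inner_sub_left, ← hu, real_inner_self_eq_norm_sq]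
    have hLinv : L * L⁻¹ = 1 := mul_inv_cancel₀ (ne_of_gt hLpos)
    rw [e1, e2] at d
    rw [e3] at lb
    have hne : L ≠ 0 := ne_of_gt hLpos
    have e5 : L⁻¹ * ‖u‖ ^ 2 = L⁻¹ * ⟪g x, u⟫ - L⁻¹ * ⟪g xs, u⟫ := by
      rw [← e4]; ring
    have hsq : L / 2 * (L⁻¹ ^ 2 * ‖u‖ ^ 2) = L⁻¹ * ‖u‖ ^ 2 / 2 := by
      field_simp
    have comb2 : L⁻¹ * ‖u‖ ^ 2 / 2 ≤ f x - f xs - ⟪g xs, x - xs⟫ := by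
      linarith [d, lb, e5, hsq]
    have e6 : L * (L⁻¹ * ‖u‖ ^ 2 / 2) = ‖u‖ ^ 2 / 2 := by
      field_simp
    have := mul_le_mul_of_nonneg_left comb2 hL
    rw [e6] at this
    linarith


/-- Averaged co-coercivity: for convex `fᵢ` with `L`-Lipschitz gradients `gᵢ`,
`F = (1/N) Σ fᵢ`, and a point `x*` with `‖gᵢ x*‖ ≤ G`, one has
`(1/N) Σᵢ ‖gᵢ x - gᵢ x*‖² ≤ 2L (F x - F x* - ⟪∇F x*, x - x*⟫)`. -/
theorem avg_grad_sq_le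
    {d N : ℕ} (hN : 0 < N)
    (f : Fin N → EuclideanSpace ℝ (Fin d) → ℝ)
    (hf : ∀ i, ConvexOn ℝ Set.univ (f i))
    (g : Fin N → EuclideanSpace ℝ (Fin d) → EuclideanSpace ℝ (Fin d))
    (hgrad : ∀ i x, HasGradientAt (f i) (g i x) x)
    (L : ℝ) (hL : 0 ≤ L)
    (hLip : ∀ i x y, ‖g i x - g i y‖ ≤ L * ‖x - y‖)
    (F : EuclideanSpace ℝ (Fin d) → ℝ) (hF : ∀ x, F x = (1 / (N : ℝ)) * ∑ i, f i x)
    (xs : EuclideanSpace ℝ (Fin d))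
    (G : ℝ) (hG : ∀ i, ‖g i xs‖ ≤ G)
    (x : EuclideanSpace ℝ (Fin d)) :
    (1 / (N : ℝ)) * ∑ i, ‖g i x - g i xs‖ ^ 2
      ≤ 2 * L * (F x - F xs - ⟪(N : ℝ)⁻¹ • ∑ i, g i xs, x - xs⟫) := by
  have key : ∀ i, ‖g i x - g i xs‖ ^ 2
      ≤ 2 * L * (f i x - f i xs - ⟪g i xs, x - xs⟫) :=
    fun i => cocoercive (f i) (hf i) (g i) (hgrad i) L hL (hLip i) xs x
  have hsum : ∑ i, ‖g i x - g i xs‖ ^ 2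
      ≤ ∑ i, 2 * L * (f i x - f i xs - ⟪g i xs, x - xs⟫) :=
    Finset.sum_le_sum fun i _ => key i
  have hNpos : (0:ℝ) < (N:ℝ) := by exact_mod_cast hN
  have hinner : ⟪(N : ℝ)⁻¹ • ∑ i, g i xs, x - xs⟫
      = (N : ℝ)⁻¹ * ∑ i, ⟪g i xs, x - xs⟫ := by
    rw [real_inner_smul_left, sum_inner]
  have hdist : ∑ i, 2 * L * (f i x - f i xs - ⟪g i xs, x - xs⟫)
      = 2 * L * ((∑ i, f i x) - (∑ i, f i xs) - ∑ i, ⟪g i xs, x - xs⟫) := by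
    rw [← Finset.mul_sum, Finset.sum_sub_distrib, Finset.sum_sub_distrib]
  have step : (1 / (N : ℝ)) * ∑ i, ‖g i x - g i xs‖ ^ 2
      ≤ (1 / (N : ℝ)) * ∑ i, 2 * L * (f i x - f i xs - ⟪g i xs, x - xs⟫) :=
    mul_le_mul_of_nonneg_left hsum (by positivity)
  refine step.trans (le_of_eq ?_)
  rw [hdist, hF, hF, hinner]
  ring
end
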